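/- arXiv:2003.07898 — 3 statements merged into one kernel-verified Lean document; each statement's English description precedes it below -/
import Mathlib

section
/- Let r ≥ 2 and 1 ≤ k ≤ r−1. Let (a_j)_{j=1}^{r+1} and (b_j)_{j=1}^{r+1} be real numbers with ∑_j a_j² = 1 and ∑_j b_j² = 1, and suppose a_k < 1, b_k < 1. Let (d_j^*)_{j=1}^{r} be positive reals with ω := d_{k+1}^*/d_k^* < 1 and d_j^* ≤ d_{k+1}^* for all k+1 ≤ j ≤ r. If ∑_{j=k+1}^{r} (d_j^*/d_k^*)·a_j·b_j ≠ 0, then (1 − a_k·b_k)² / (∑_{j=k+1}^{r} (d_j^*/d_k^*)·a_j·b_j)² ≥ ω^{−2}. -/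
open Finset

lemma tail_sq_le (r k : ℕ) (hk1 : 1 ≤ k) (hkr : k + 1 ≤ r) (a : ℕ → ℝ)
    (ha : ∑ j ∈ Icc 1 (r + 1), (a j) ^ 2 = 1) :
    ∑ j ∈ Icc (k + 1) r, (a j) ^ 2 ≤ 1 - (a k) ^ 2 := by
  have hsub : Icc (k + 1) r ⊆ (Icc 1 (r + 1)).erase k := by
    intro j hj
    simp only [mem_Icc, mem_erase] at *
    omega
  have hk : k ∈ Icc 1 (r + 1) := by simp only [mem_Icc]; omega
  have h1 : ∑ j ∈ (Icc 1 (r + 1)).erase k, (a j) ^ 2 = 1 - (a k) ^ 2 := by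
    rw [← Finset.add_sum_erase _ (fun j => (a j) ^ 2) hk] at ha
    linarith
  rw [← h1]
  exact Finset.sum_le_sum_of_subset_of_nonneg hsub (fun j _ _ => sq_nonneg _)

/-- Central inequality in the proof of Lemma 1 (deflation control):
`(1 - a_k b_k)² / (∑_{j=k+1}^r (d_j/d_k) a_j b_j)² ≥ ω⁻²` with `ω = d_{k+1}/d_k`. -/
theorem deflation_central_inequality
    (r k : ℕ) (hr : 2 ≤ r) (hk1 : 1 ≤ k) (hkr : k ≤ r - 1)
    (a b : ℕ → ℝ) (d : ℕ → ℝ)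
    (ha : ∑ j ∈ Icc 1 (r + 1), (a j) ^ 2 = 1)
    (hb : ∑ j ∈ Icc 1 (r + 1), (b j) ^ 2 = 1)
    (hak : a k < 1) (hbk : b k < 1)
    (hd : ∀ j ∈ Icc 1 r, 0 < d j)
    (hω : d (k + 1) / d k < 1)
    (hmono : ∀ j ∈ Icc (k + 1) r, d j ≤ d (k + 1))
    (hS : ∑ j ∈ Icc (k + 1) r, d j / d k * a j * b j ≠ 0) :
    ((d (k + 1) / d k)⁻¹) ^ 2 ≤
      (1 - a k * b k) ^ 2 / (∑ j ∈ Icc (k + 1) r, d j / d k * a j * b j) ^ 2 := by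
  have hkr' : k + 1 ≤ r := by omega
  have hdk : 0 < d k := hd k (by simp only [mem_Icc]; omega)
  have hdk1 : 0 < d (k + 1) := hd (k + 1) (by simp only [mem_Icc]; omega)
  set ω := d (k + 1) / d k with hωdef
  have hω0 : 0 < ω := div_pos hdk1 hdk
  set S := ∑ j ∈ Icc (k + 1) r, d j / d k * a j * b j with hSdef
  -- bound |S| by ω * ∑ |a j| * |b j|
  have habs : |S| ≤ ω * ∑ j ∈ Icc (k + 1) r, |a j| * |b j| := by
    calc |S| ≤ ∑ j ∈ Icc (k + 1) r, |d j / d k * a j * b j| :=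
          Finset.abs_sum_le_sum_abs _ _
      _ ≤ ∑ j ∈ Icc (k + 1) r, ω * (|a j| * |b j|) := by
          apply Finset.sum_le_sum
          intro j hj
          rw [abs_mul, abs_mul]
          have hdj : 0 < d j := hd j (by simp only [mem_Icc] at hj ⊢; omega)
          have h1 : |d j / d k| ≤ ω := by
            rw [abs_of_pos (div_pos hdj hdk)]
            rw [hωdef]
            exact (div_le_div_iff_of_pos_right hdk).mpr (hmono j hj)
          have := mul_le_mul_of_nonneg_right h1
            (mul_nonneg (abs_nonneg (a j)) (abs_nonneg (b j)))
          linarith [this]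
      _ = ω * ∑ j ∈ Icc (k + 1) r, |a j| * |b j| := by rw [Finset.mul_sum]
  -- Cauchy-Schwarz
  have hCS : (∑ j ∈ Icc (k + 1) r, |a j| * |b j|) ^ 2 ≤
      (∑ j ∈ Icc (k + 1) r, (a j) ^ 2) * (∑ j ∈ Icc (k + 1) r, (b j) ^ 2) := by
    have h := Finset.sum_mul_sq_le_sq_mul_sq (Icc (k + 1) r)
      (fun j => |a j|) (fun j => |b j|)
    simpa [sq_abs] using h
  have hta := tail_sq_le r k hk1 hkr' a ha
  have htb := tail_sq_le r k hk1 hkr' b hb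
  have hak1 : (a k) ^ 2 ≤ 1 := by
    nlinarith [Finset.sum_nonneg (fun j (hj : j ∈ Icc (k+1) r) => sq_nonneg (a j)), hta]
  have hbk1 : (b k) ^ 2 ≤ 1 := by
    nlinarith [Finset.sum_nonneg (fun j (hj : j ∈ Icc (k+1) r) => sq_nonneg (b j)), htb]
  have hkey : (1 - (a k) ^ 2) * (1 - (b k) ^ 2) ≤ (1 - a k * b k) ^ 2 := by
    nlinarith [sq_nonneg (a k - b k)]
  have hsumabs : 0 ≤ ∑ j ∈ Icc (k + 1) r, |a j| * |b j| :=
    Finset.sum_nonneg (fun j _ => mul_nonneg (abs_nonneg _) (abs_nonneg _))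
  have hS2 : S ^ 2 ≤ ω ^ 2 * (1 - a k * b k) ^ 2 := by
    have h1 : S ^ 2 ≤ ω ^ 2 * (∑ j ∈ Icc (k + 1) r, |a j| * |b j|) ^ 2 := by
      have := pow_le_pow_left₀ (abs_nonneg S) habs 2
      rwa [sq_abs, mul_pow] at this
    have h2 : (∑ j ∈ Icc (k + 1) r, |a j| * |b j|) ^ 2 ≤ (1 - a k * b k) ^ 2 := by
      calc _ ≤ (∑ j ∈ Icc (k + 1) r, (a j) ^ 2) * (∑ j ∈ Icc (k + 1) r, (b j) ^ 2) := hCS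
        _ ≤ (1 - (a k) ^ 2) * (1 - (b k) ^ 2) := by
            apply mul_le_mul hta htb
              (Finset.sum_nonneg (fun j _ => sq_nonneg _)) (by nlinarith)
        _ ≤ _ := hkey
    exact h1.trans (mul_le_mul_of_nonneg_left h2 (sq_nonneg ω))
  have hSpos : 0 < S ^ 2 := by positivity
  rw [le_div_iff₀ hSpos]
  calc ω⁻¹ ^ 2 * S ^ 2 ≤ ω⁻¹ ^ 2 * (ω ^ 2 * (1 - a k * b k) ^ 2) := by
        apply mul_le_mul_of_nonneg_left hS2 (by positivity)
    _ = (1 - a k * b k) ^ 2 := by field_simp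
end

section
/- Let C, C̃ ∈ ℝ^{p×q}, and let (d_k, u_k, v_k) and (d̃_k, ũ_k, ṽ_k) satisfy d_k·u_k = C·v_k and d̃_k·ũ_k = C̃·ṽ_k with ‖v_k‖₂ = ‖ṽ_k‖₂ = 1. Denote by d_c the largest singular value of C. Then ‖d̃_k·ũ_k·ṽ_kᵀ − d_k·u_k·v_kᵀ‖_F ≤ 2·d_c·‖ṽ_k − v_k‖₂ + ‖C̃ − C‖_F, provided d_k·‖u_k‖₂ ≤ d_c. -/
/-- Euclidean norm of a vector. -/
noncomputable def enorm' {n : ℕ} (x : Fin n → ℝ) : ℝ :=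
  Real.sqrt (∑ i, (x i) ^ 2)

/-- Frobenius norm of a matrix. -/
noncomputable def frob {n m : ℕ} (M : Matrix (Fin n) (Fin m) ℝ) : ℝ :=
  Real.sqrt (∑ i, ∑ j, (M i j) ^ 2)

lemma sqrt_sum_sq_add_le {ι : Type*} [Fintype ι] (a b : ι → ℝ) :
    Real.sqrt (∑ i, (a i + b i)^2) ≤ Real.sqrt (∑ i, (a i)^2) + Real.sqrt (∑ i, (b i)^2) := by
  have h := norm_add_le ((WithLp.equiv 2 (ι → ℝ)).symm a) ((WithLp.equiv 2 (ι → ℝ)).symm b)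
  simpa [EuclideanSpace.norm_eq, Real.norm_eq_abs, sq_abs] using h

lemma enorm'_add_le {n : ℕ} (a b : Fin n → ℝ) :
    enorm' (fun i => a i + b i) ≤ enorm' a + enorm' b := sqrt_sum_sq_add_le a b

lemma frob_add_le {n m : ℕ} (A B : Matrix (Fin n) (Fin m) ℝ) :
    frob (fun i j => A i j + B i j) ≤ frob A + frob B := by
  have h := sqrt_sum_sq_add_le (ι := Fin n × Fin m) (fun p => A p.1 p.2) (fun p => B p.1 p.2)
  simpa [frob, Fintype.sum_prod_type] using h

lemma frob_rank_one {n m : ℕ} (x : Fin n → ℝ) (y : Fin m → ℝ) :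
    frob (fun i j => x i * y j) = enorm' x * enorm' y := by
  unfold frob enorm'
  rw [← Real.sqrt_mul (by positivity), Finset.sum_mul]
  congr 1
  refine Finset.sum_congr rfl fun i _ => ?_
  rw [Finset.mul_sum]
  exact Finset.sum_congr rfl fun j _ => by ring

lemma enorm_mulVec_le_frob {n m : ℕ} (M : Matrix (Fin n) (Fin m) ℝ) (x : Fin m → ℝ) :
    enorm' (M.mulVec x) ≤ frob M * enorm' x := by
  unfold enorm' frob
  rw [← Real.sqrt_mul (by positivity), Finset.sum_mul]
  apply Real.sqrt_le_sqrt
  refine Finset.sum_le_sum fun i _ => ?_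
  simpa [Matrix.mulVec, dotProduct] using
    Finset.sum_mul_sq_le_sq_mul_sq Finset.univ (fun j => M i j) x

/-- Perturbation bound from the proof of Lemma 4:
`‖d̃ ũ ṽᵀ − d u vᵀ‖_F ≤ 2 d_c ‖ṽ − v‖₂ + ‖C̃ − C‖_F`, where `d u = C v`,
`d̃ ũ = C̃ ṽ`, `‖v‖₂ = ‖ṽ‖₂ = 1`, `d_c` bounds the operator norm of `C`,
and `d ‖u‖₂ ≤ d_c`. -/
theorem unit_rank_perturbation_bound {p q : ℕ}
    (C Ct : Matrix (Fin p) (Fin q) ℝ) (dc d dt : ℝ)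
    (u ut : Fin p → ℝ) (v vt : Fin q → ℝ)
    (hv : enorm' v = 1) (hvt : enorm' vt = 1)
    (huv : d • u = C.mulVec v) (hutvt : dt • ut = Ct.mulVec vt)
    (hop : ∀ w : Fin q → ℝ, enorm' (C.mulVec w) ≤ dc * enorm' w)
    (hdu : d * enorm' u ≤ dc) :
    frob (fun i j => dt * ut i * vt j - d * u i * v j) ≤
      2 * dc * enorm' (fun k => vt k - v k) + frob (Ct - C) := by
  set dv : Fin q → ℝ := fun k => vt k - v k with hdv
  set w : Fin p → ℝ := fun i => C.mulVec dv i + (Ct - C).mulVec vt i with hw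
  have hCv : ∀ i, d * u i = C.mulVec v i := fun i => congrFun huv i
  have hCtvt : ∀ i, dt * ut i = Ct.mulVec vt i := fun i => congrFun hutvt i
  have hwi : ∀ i, w i = dt * ut i - d * u i := by
    intro i
    have hdv' : dv = vt - v := rfl
    rw [hw]
    simp only [hdv', Matrix.mulVec_sub, Matrix.sub_mulVec, Pi.sub_apply]
    rw [← hCv i, ← hCtvt i]
    ring
  have hdecomp : (fun i j => dt * ut i * vt j - d * u i * v j) =
      fun i j => (d * u i) * dv j + w i * vt j := by
    funext i j
    rw [hwi i]
    simp only [hdv]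
    ring
  rw [hdecomp]
  have h1 : frob (fun i j => (d * u i) * dv j + w i * vt j) ≤
      frob (fun i j => (d * u i) * dv j) + frob (fun i j => w i * vt j) :=
    frob_add_le _ _
  rw [frob_rank_one, frob_rank_one] at h1
  have hdu' : enorm' (fun i => d * u i) ≤ dc := by
    have : (fun i => d * u i) = C.mulVec v := by
      funext i; exact hCv i
    rw [this]
    simpa [hv] using hop v
  have hwle : enorm' w ≤ dc * enorm' dv + frob (Ct - C) := by
    have ht : enorm' w ≤ enorm' (C.mulVec dv) + enorm' ((Ct - C).mulVec vt) :=
      enorm'_add_le _ _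
    have h2 := hop dv
    have h3 : enorm' ((Ct - C).mulVec vt) ≤ frob (Ct - C) := by
      simpa [hvt] using enorm_mulVec_le_frob (Ct - C) vt
    linarith
  have hdvnn : 0 ≤ enorm' dv := Real.sqrt_nonneg _
  have hwnn : 0 ≤ enorm' w := Real.sqrt_nonneg _
  calc frob (fun i j => (d * u i) * dv j + w i * vt j)
      ≤ enorm' (fun i => d * u i) * enorm' dv + enorm' w * enorm' vt := h1
    _ ≤ dc * enorm' dv + (dc * enorm' dv + frob (Ct - C)) * 1 := by
        rw [hvt]
        gcongr
    _ = 2 * dc * enorm' dv + frob (Ct - C) := by ring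
end

section
/- Let A, B ∈ ℝ^{p×q}, let S_A be the index set of the s entries of A of largest absolute value, and let J be the support of B with |J| ≤ s. Suppose ‖A − B‖_F ≤ M. Then ‖B_{J ∩ S_A^c}‖_F ≤ 2M, where B_K zeroes out entries outside K. -/
open Finset

/-- Thresholding stability (inequality used in the proof of Theorem 2): if `S_A`
collects the `s` entries of `A` of largest absolute value, `J = supp(B)` has
`|J| ≤ s`, and `‖A - B‖_F ≤ M`, then `‖B_{J ∩ S_Aᶜ}‖_F ≤ 2M`. -/
theorem thresholding_stability {p q : ℕ} (A B : Fin p × Fin q → ℝ)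
    (s : ℕ) (M : ℝ)
    (SA : Finset (Fin p × Fin q)) (hSAcard : SA.card = s)
    (hSAtop : ∀ a ∈ SA, ∀ b ∉ SA, |A b| ≤ |A a|)
    (hJ : (univ.filter (fun i => B i ≠ 0)).card ≤ s)
    (hAB : Real.sqrt (∑ i, (A i - B i) ^ 2) ≤ M) :
    Real.sqrt (∑ i ∈ (univ.filter (fun i => B i ≠ 0)) \ SA, (B i) ^ 2) ≤ 2 * M := by
  classical
  set J := univ.filter (fun i => B i ≠ 0) with hJdef
  set K := J \ SA with hKdef
  have hM : 0 ≤ M := le_trans (Real.sqrt_nonneg _) hAB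
  have hABsq : ∑ i, (A i - B i) ^ 2 ≤ M ^ 2 := by
    have h1 : 0 ≤ ∑ i, (A i - B i) ^ 2 := Finset.sum_nonneg fun i _ => sq_nonneg _
    nlinarith [Real.sq_sqrt h1, Real.sqrt_nonneg (∑ i, (A i - B i) ^ 2)]
  -- cardinality comparison
  have hcard : K.card ≤ (SA \ J).card := by
    have h1 := Finset.card_sdiff_add_card_inter J SA
    have h2 := Finset.card_sdiff_add_card_inter SA J
    have h3 : (J ∩ SA).card = (SA ∩ J).card := by rw [Finset.inter_comm]
    have h0 : K.card = (J \ SA).card := rfl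
    omega
  -- sum of A^2 over K is dominated by sum over SA \ J
  have hsum1 : ∑ i ∈ K, A i ^ 2 ≤ ∑ i ∈ SA \ J, A i ^ 2 := by
    rcases Finset.exists_subset_card_eq hcard with ⟨T, hTsub, hTcard⟩
    rcases K.eq_empty_or_nonempty with h | h
    · rw [h]
      simpa using Finset.sum_nonneg (fun i (_ : i ∈ SA \ J) => sq_nonneg (A i))
    · have hTne : T.Nonempty := Finset.card_pos.mp (by rw [hTcard]; exact Finset.card_pos.mpr h)
      obtain ⟨b, hbT, hbmin⟩ := Finset.exists_min_image T (fun i => A i ^ 2) hTne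
      have hb : b ∈ SA := (Finset.mem_sdiff.mp (hTsub hbT)).1
      calc ∑ i ∈ K, A i ^ 2 ≤ ∑ _i ∈ K, A b ^ 2 := by
            apply Finset.sum_le_sum
            intro i hi
            have hiSA : i ∉ SA := (Finset.mem_sdiff.mp hi).2
            have habs := hSAtop b hb i hiSA
            calc A i ^ 2 = |A i| ^ 2 := (sq_abs _).symm
              _ ≤ |A b| ^ 2 := by
                  exact pow_le_pow_left₀ (abs_nonneg _) habs 2
              _ = A b ^ 2 := sq_abs _
        _ = (K.card : ℝ) * A b ^ 2 := by rw [Finset.sum_const, nsmul_eq_mul]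
        _ = (T.card : ℝ) * A b ^ 2 := by rw [hTcard]
        _ = ∑ _i ∈ T, A b ^ 2 := by rw [Finset.sum_const, nsmul_eq_mul]
        _ ≤ ∑ i ∈ T, A i ^ 2 := Finset.sum_le_sum fun i hi => hbmin i hi
        _ ≤ ∑ i ∈ SA \ J, A i ^ 2 :=
            Finset.sum_le_sum_of_subset_of_nonneg hTsub (fun i _ _ => sq_nonneg _)
  -- entries outside J vanish for B
  have hBzero : ∀ i, i ∉ J → B i = 0 := by
    intro i hi
    by_contra hne
    exact hi (Finset.mem_filter.mpr ⟨Finset.mem_univ i, hne⟩)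
  have hsum2 : ∑ i ∈ SA \ J, A i ^ 2 ≤ M ^ 2 := by
    have heq : ∑ i ∈ SA \ J, A i ^ 2 = ∑ i ∈ SA \ J, (A i - B i) ^ 2 := by
      apply Finset.sum_congr rfl
      intro i hi
      rw [hBzero i (Finset.mem_sdiff.mp hi).2, sub_zero]
    rw [heq]
    exact le_trans (Finset.sum_le_sum_of_subset_of_nonneg (Finset.subset_univ _)
      (fun i _ _ => sq_nonneg _)) hABsq
  have hsumK_A : Real.sqrt (∑ i ∈ K, A i ^ 2) ≤ M := by
    have : ∑ i ∈ K, A i ^ 2 ≤ M ^ 2 := le_trans hsum1 hsum2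
    calc Real.sqrt (∑ i ∈ K, A i ^ 2) ≤ Real.sqrt (M ^ 2) := Real.sqrt_le_sqrt this
      _ = M := by rw [Real.sqrt_sq hM]
  have hsumK_BA : Real.sqrt (∑ i ∈ K, (B i - A i) ^ 2) ≤ M := by
    have h1 : ∑ i ∈ K, (B i - A i) ^ 2 ≤ M ^ 2 := by
      have : ∑ i ∈ K, (B i - A i) ^ 2 ≤ ∑ i, (A i - B i) ^ 2 := by
        have heq : ∀ i, (B i - A i) ^ 2 = (A i - B i) ^ 2 := fun i => by ring
        simp only [heq]
        exact Finset.sum_le_sum_of_subset_of_nonneg (Finset.subset_univ _)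
          (fun i _ _ => sq_nonneg _)
      exact le_trans this hABsq
    calc Real.sqrt (∑ i ∈ K, (B i - A i) ^ 2) ≤ Real.sqrt (M ^ 2) := Real.sqrt_le_sqrt h1
      _ = M := by rw [Real.sqrt_sq hM]
  -- triangle inequality via EuclideanSpace
  set x : EuclideanSpace ℝ (Fin p × Fin q) := WithLp.toLp 2 (fun i => if i ∈ K then B i - A i else 0) with hx
  set y : EuclideanSpace ℝ (Fin p × Fin q) := WithLp.toLp 2 (fun i => if i ∈ K then A i else 0) with hy
  have hsum : ∀ (c : Fin p × Fin q → ℝ),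
      ∑ i, ‖(if i ∈ K then c i else 0 : ℝ)‖ ^ 2 = ∑ i ∈ K, c i ^ 2 := by
    intro c
    have h1 : ∀ i : Fin p × Fin q,
        ‖(if i ∈ K then c i else 0 : ℝ)‖ ^ 2 = if i ∈ K then c i ^ 2 else 0 := by
      intro i
      by_cases h : i ∈ K <;> simp [h, Real.norm_eq_abs, sq_abs]
    rw [Finset.sum_congr rfl fun i _ => h1 i, Finset.sum_ite_mem, Finset.univ_inter]
  have norm_x : ‖x‖ = Real.sqrt (∑ i ∈ K, (B i - A i) ^ 2) := by
    rw [EuclideanSpace.norm_eq]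
    congr 1
    exact hsum (fun i => B i - A i)
  have norm_y : ‖y‖ = Real.sqrt (∑ i ∈ K, A i ^ 2) := by
    rw [EuclideanSpace.norm_eq]
    congr 1
    exact hsum A
  have norm_xy : ‖x + y‖ = Real.sqrt (∑ i ∈ K, B i ^ 2) := by
    rw [EuclideanSpace.norm_eq]
    congr 1
    have h2 : ∀ i : Fin p × Fin q, (x + y) i = if i ∈ K then B i else 0 := by
      intro i
      simp only [hx, hy, PiLp.add_apply]
      by_cases h : i ∈ K <;> simp [h]
    rw [Finset.sum_congr rfl fun i _ => by rw [h2 i]]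
    exact hsum B
  calc Real.sqrt (∑ i ∈ K, B i ^ 2) = ‖x + y‖ := norm_xy.symm
    _ ≤ ‖x‖ + ‖y‖ := norm_add_le x y
    _ = Real.sqrt (∑ i ∈ K, (B i - A i) ^ 2) + Real.sqrt (∑ i ∈ K, A i ^ 2) := by
        rw [norm_x, norm_y]
    _ ≤ M + M := add_le_add hsumK_BA hsumK_A
    _ = 2 * M := by ring
end
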